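/- Let p be an odd prime and let a, b, c, d, e, k be integers with d ≥ 2, e ≥ 1, k ≥ 1, gcd(c, p) = 1, and assume e ≥ 2 if p = 3. Let ζ be a primitive p^k-th root of unity and define g(t) = a + bt + c·Σ_{j=2}^{d} C(t, j)·p^{(j−2)e}, where C(t, j) denotes the binomial coefficient. Then Norm_{ℚ(ζ_{p^k})/ℚ}( Σ_{t=0}^{p^k−1} ζ^{g(t)} ) = p^{(1/2)·k·(p−1)·p^{k−1}}. -/

import Mathlib

noncomputable section

open IntermediateField

/-- An intermediate field is closed under integer powers. -/
theorem IF.zpow_mem (F : IntermediateField ℚ ℂ) {x : ℂ} (hx : x ∈ F) (n : ℤ) :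
    x ^ n ∈ F :=
  F.toSubfield.zpow_mem hx n

open Finset

namespace Stmt14Aux


lemma three_pow_ge (w : ℕ) (hw : 1 ≤ w) : w + 2 ≤ 3 ^ w := by
  induction w with
  | zero => omega
  | succ n ih =>
    rcases Nat.eq_or_lt_of_le hw with h | h
    · simp [← h]
    · have h1 : 1 ≤ n := by omega
      have := ih h1
      have : 3 ^ n ≥ 1 := Nat.one_le_pow _ _ (by norm_num)
      calc n + 1 + 2 ≤ 3 ^ n + 3 ^ n + 3 ^ n := by omega
      _ = 3 ^ (n+1) := by ring

lemma NT1 (p : ℕ) (hp : p.Prime) {i : ℕ} (hi : 1 ≤ i) {s u : ℕ} (hu : p ^ s ∣ u) :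
    p ^ s ∣ p ^ (i.factorization p) * u.choose i := by
  rcases Nat.eq_zero_or_pos u with rfl | hu0
  · rcases Nat.eq_zero_or_pos s with rfl | _
    · simpa using Dvd.intro _ rfl
    · rw [Nat.choose_eq_zero_of_lt (by omega), Nat.mul_zero]
      exact dvd_zero _
  rcases Nat.lt_or_ge u i with h | h
  · rw [Nat.choose_eq_zero_of_lt h, Nat.mul_zero]; exact dvd_zero _
  -- key identity : u * (u-1).choose (i-1) = u.choose i * i
  have hid : u.choose i * i = u * (u-1).choose (i-1) := by
    obtain ⟨u', rfl⟩ : ∃ u', u = u' + 1 := ⟨u - 1, by omega⟩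
    obtain ⟨i', rfl⟩ : ∃ i', i = i' + 1 := ⟨i - 1, by omega⟩
    simpa [Nat.add_sub_cancel, mul_comm] using (Nat.add_one_mul_choose_eq u' i').symm
  have hdvd : p ^ s ∣ u.choose i * i := hid ▸ hu.mul_right _
  -- write i = p^w * i'
  have hw : i = p ^ (i.factorization p) * (i / p ^ (i.factorization p)) :=
    (Nat.ordProj_mul_ordCompl_eq_self i p).symm
  have hcop : Nat.Coprime (p ^ s) (i / p ^ (i.factorization p)) :=
    Nat.Coprime.pow_left _ (Nat.coprime_ordCompl hp (by omega))
  apply Nat.Coprime.dvd_of_dvd_mul_right hcop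
  calc p ^ s ∣ u.choose i * i := hdvd
  _ = u.choose i * (p ^ (i.factorization p) * (i / p ^ (i.factorization p))) := by
      rw [Nat.ordProj_mul_ordCompl_eq_self]
  _ = p ^ (i.factorization p) * u.choose i * (i / p ^ (i.factorization p)) := by ring

lemma w_ge_imp (p : ℕ) (hp : p.Prime) (h3 : 3 ≤ p) {n : ℕ} (hn : 1 ≤ n) :
    n.factorization p + 2 ≤ n ∨ n.factorization p = 0 := by
  set w := n.factorization p with hw
  rcases Nat.eq_zero_or_pos w with h | h
  · exact Or.inr h
  left
  have h1 : p ^ w ∣ n := Nat.ordProj_dvd n p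
  have h2 : p ^ w ≤ n := Nat.le_of_dvd (by omega) h1
  have h4 : 3 ^ w ≤ p ^ w := Nat.pow_le_pow_left h3 w
  have := three_pow_ge w h
  omega

/-- `v_p(n) ≤ e * (n-1)` -/
lemma w_le (p : ℕ) (hp : p.Prime) (h3 : 3 ≤ p) {e n : ℕ} (he : 1 ≤ e) (hn : 1 ≤ n) :
    n.factorization p ≤ e * (n - 1) := by
  rcases w_ge_imp p hp h3 hn with h | h
  · calc n.factorization p ≤ n - 2 := by omega
    _ ≤ 1 * (n-1) := by simp only [Nat.one_mul]; omega
    _ ≤ e * (n-1) := Nat.mul_le_mul_right _ he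
  · omega

/-- `v_p(n) + 1 ≤ e * (n-1)` for `n ≥ 2` -/
lemma w_lt (p : ℕ) (hp : p.Prime) (h3 : 3 ≤ p) {e n : ℕ} (he : 1 ≤ e) (hn : 2 ≤ n) :
    n.factorization p + 1 ≤ e * (n - 1) := by
  rcases w_ge_imp p hp h3 (n := n) (by omega) with h | h
  · have : n.factorization p + 1 ≤ n - 1 := by omega
    calc n.factorization p + 1 ≤ 1 * (n-1) := by simp only [Nat.one_mul]; omega
    _ ≤ e * (n-1) := Nat.mul_le_mul_right _ he
  · have : 1 ≤ 1 * (n-1) := by simp only [Nat.one_mul]; omega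
    calc n.factorization p + 1 = 1 := by omega
    _ ≤ 1 * (n-1) := this
    _ ≤ e * (n-1) := Nat.mul_le_mul_right _ he

lemma ineq_key (p : ℕ) (hp : p.Prime) (h3 : 3 ≤ p) {e l i j : ℕ} (he : 1 ≤ e)
    (hl : 1 ≤ l) (hi : 1 ≤ i) (hli : l + i ≤ j) (hj : 3 ≤ j) :
    1 + l.factorization p + i.factorization p ≤ (j - 2) * e := by
  have key : 1 + l.factorization p + i.factorization p ≤ e * (l + i - 2) + 1 ∧
      (2 ≤ l ∨ 2 ≤ i → 1 + l.factorization p + i.factorization p ≤ e * (l + i - 2)) := by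
    constructor
    · have h1 := w_le p hp h3 he hl
      have h2 := w_le p hp h3 he hi
      have : e * (l - 1) + e * (i - 1) = e * (l + i - 2) := by
        rw [← Nat.mul_add]; congr 1; omega
      omega
    · rintro (h | h)
      · have h1 := w_lt p hp h3 he h
        have h2 := w_le p hp h3 he hi
        have : e * (l - 1) + e * (i - 1) = e * (l + i - 2) := by
          rw [← Nat.mul_add]; congr 1; omega
        omega
      · have h1 := w_le p hp h3 he hl
        have h2 := w_lt p hp h3 he h
        have : e * (l - 1) + e * (i - 1) = e * (l + i - 2) := by
          rw [← Nat.mul_add]; congr 1; omega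
        omega
  rcases Nat.lt_or_ge (l + i) j with h | h
  · -- l + i ≤ j - 1
    calc 1 + l.factorization p + i.factorization p ≤ e * (l + i - 2) + 1 := key.1
    _ ≤ e * (j - 1 - 2) + e := by
        have : e * (l + i - 2) ≤ e * (j - 1 - 2) := Nat.mul_le_mul_left _ (by omega)
        omega
    _ = e * (j - 2 - 1) + e * 1 := by
        have hj12 : j - 1 - 2 = j - 2 - 1 := by omega
        rw [hj12, Nat.mul_one]
    _ ≤ e * (j - 2) := by rw [← Nat.mul_add]; exact Nat.mul_le_mul_left _ (by omega)
    _ = (j - 2) * e := Nat.mul_comm _ _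
  · have hlij : l + i = j := by omega
    have h2 : 2 ≤ l ∨ 2 ≤ i := by omega
    calc 1 + l.factorization p + i.factorization p ≤ e * (l + i - 2) := key.2 h2
    _ = (j - 2) * e := by rw [Nat.mul_comm]; congr 1; omega

/-- from `p^m ∣ p^w * X` and `w + c ≤ A` deduce `p^(m+c) ∣ p^A * X`. -/
lemma mono_dvd (p m w c A X : ℕ) (h : p ^ m ∣ p ^ w * X) (hwc : w + c ≤ A) :
    p ^ (m + c) ∣ p ^ A * X := by
  have : p ^ A * X = p ^ (A - w - c) * (p ^ c * (p ^ w * X)) := by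
    rw [← mul_assoc, ← mul_assoc, ← pow_add, ← pow_add]
    congr 2
    omega
  rw [this]
  have hpc : p ^ (m + c) = p ^ c * p ^ m := by rw [pow_add, Nat.mul_comm]
  exact dvd_mul_of_dvd_right (hpc ▸ Nat.mul_dvd_mul (dvd_refl (p ^ c)) h) _

lemma key_dvd (p : ℕ) (hp : p.Prime) {k s : ℕ} (hs : s + 1 ≤ k) {u δ : ℕ}
    (hu : p ^ s ∣ u) (hδ : p ^ (k - (s+1)) ∣ δ) {l i A : ℕ} (hl : 1 ≤ l) (hi : 1 ≤ i)
    (hA : 1 + l.factorization p + i.factorization p ≤ A) :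
    p ^ k ∣ p ^ A * (δ.choose l * u.choose i) := by
  have h1 : p ^ (k - (s+1)) ∣ p ^ (l.factorization p) * δ.choose l := NT1 p hp hl hδ
  have h2 : p ^ s ∣ p ^ (i.factorization p) * u.choose i := NT1 p hp hi hu
  have h3 : p ^ (k - 1) ∣ p ^ (l.factorization p + i.factorization p) * (δ.choose l * u.choose i) := by
    have := Nat.mul_dvd_mul h1 h2
    have heq : p ^ (k - (s+1)) * p ^ s = p ^ (k-1) := by rw [← pow_add]; congr 1; omega
    have heq2 : p ^ (l.factorization p) * δ.choose l * (p ^ (i.factorization p) * u.choose i)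
        = p ^ (l.factorization p + i.factorization p) * (δ.choose l * u.choose i) := by
      rw [pow_add]; ring
    rwa [heq, heq2] at this
  have := mono_dvd p (k-1) (l.factorization p + i.factorization p) 1 A _ h3 (by omega)
  rwa [show k - 1 + 1 = k by omega] at this

/-- periodicity divisibility: `p^k ∣ p^((j-2)e) * C(p^k, i)` for `1 ≤ i ≤ j`, `2 ≤ j`. -/
lemma per_dvd (p : ℕ) (hp : p.Prime) (h3 : 3 ≤ p) {e k i j : ℕ} (he : 1 ≤ e)
    (hi : 1 ≤ i) (hij : i ≤ j) (hj : 2 ≤ j) :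
    p ^ k ∣ p ^ ((j - 2) * e) * (p ^ k).choose i := by
  have h1 : p ^ k ∣ p ^ (i.factorization p) * (p ^ k).choose i := NT1 p hp hi dvd_rfl
  have h2 : i.factorization p ≤ (j - 2) * e := by
    rcases w_ge_imp p hp h3 hi with h | h
    · have : i.factorization p ≤ j - 2 := by omega
      calc i.factorization p ≤ (j-2) * 1 := by omega
      _ ≤ (j-2) * e := Nat.mul_le_mul_left _ he
    · omega
  have := mono_dvd p k (i.factorization p) 0 ((j-2)*e) _ h1 (by omega)
  simpa using this




/-- Vandermonde (ℕ, peeled form): `C(t+v, j) = C(t,j) + Σ_{i<j} C(v,i+1) C(t, j-(i+1))`. -/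
lemma vand1 (v t j : ℕ) :
    (t + v).choose j = t.choose j + ∑ i ∈ range j, v.choose (i+1) * t.choose (j - (i+1)) := by
  rw [Nat.add_comm t v, Nat.add_choose_eq]
  rw [Finset.Nat.sum_antidiagonal_eq_sum_range_succ (f := fun a b => v.choose a * t.choose b)]
  rw [Finset.sum_range_succ']
  simp only [Nat.choose_zero_right, Nat.one_mul, Nat.sub_zero]
  rw [Nat.add_comm]

/-- ℤ-cast version. -/
lemma vand1' (v t j : ℕ) :
    ((t + v).choose j : ℤ) = (t.choose j : ℤ)
      + ∑ i ∈ range j, (v.choose (i+1) : ℤ) * (t.choose (j - (i+1)) : ℤ) := by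
  rw [vand1 v t j]
  push_cast
  ring

/-- A sum of a function with period `N` over a window of length `N` is translation invariant. -/
lemma sum_shift (h : ℕ → ℂ) (N : ℕ) (hper : ∀ t, h (t + N) = h t) (r : ℕ) :
    ∑ t ∈ range N, h (r + t) = ∑ t ∈ range N, h t := by
  induction r with
  | zero => simp
  | succ n ih =>
    have step : ∑ t ∈ range N, h (n + 1 + t) = ∑ t ∈ range N, h (n + t) := by
      have h1 : ∑ t ∈ range (N + 1), h (n + t) =
          (∑ t ∈ range N, h (n + (t + 1))) + h (n + 0) := Finset.sum_range_succ' _ _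
      have h2 : ∑ t ∈ range (N + 1), h (n + t) =
          (∑ t ∈ range N, h (n + t)) + h (n + N) := Finset.sum_range_succ _ _
      have h3 : h (n + N) = h (n + 0) := by rw [Nat.add_zero]; exact hper n
      have h4 : ∀ t, h (n + (t + 1)) = h (n + 1 + t) := by intro t; congr 1; omega
      simp only [h4] at h1
      have := h1.symm.trans h2
      rw [h3] at this
      exact add_right_cancel this
    rw [step, ih]

/-- Lemma A: vanishing of exponential sums with a nontrivial translation character. -/
lemma lemA {N : ℕ} {ξ : ℂ} (hξ : IsPrimitiveRoot ξ N) (F : ℕ → ℤ) (δ : ℕ) (D : ℤ)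
    (H1 : ∀ t, (N : ℤ) ∣ F (t + N) - F t)
    (H2 : ∀ t, (N : ℤ) ∣ F (t + δ) - (F t + D))
    (H3 : ¬ (N : ℤ) ∣ D) :
    ∑ t ∈ range N, ξ ^ F t = 0 := by
  rcases Nat.eq_zero_or_pos N with rfl | hNpos
  · simp
  have hξ0 : ξ ≠ 0 := by
    intro h
    have h1 := hξ.pow_eq_one
    rw [h, zero_pow (by omega : N ≠ 0)] at h1
    exact zero_ne_one h1
  have hper : ∀ t, ξ ^ F (t + N) = ξ ^ F t := by
    intro t
    obtain ⟨m, hm⟩ := H1 t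
    have : F (t + N) = F t + N * m := by linarith [hm]
    rw [this, zpow_add₀ hξ0, zpow_mul, zpow_natCast, hξ.pow_eq_one, one_zpow, mul_one]
  have hshift : ∀ t, ξ ^ F (t + δ) = ξ ^ D * ξ ^ F t := by
    intro t
    obtain ⟨m, hm⟩ := H2 t
    have : F (t + δ) = F t + D + N * m := by linarith [hm]
    rw [this, zpow_add₀ hξ0, zpow_add₀ hξ0, zpow_mul, zpow_natCast, hξ.pow_eq_one, one_zpow,
      mul_one, mul_comm]
  have key : ∑ t ∈ range N, ξ ^ F t = ξ ^ D * ∑ t ∈ range N, ξ ^ F t := by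
    conv_lhs => rw [← sum_shift (fun t => ξ ^ F t) N hper δ]
    rw [Finset.mul_sum]
    refine Finset.sum_congr rfl fun t _ => ?_
    rw [show δ + t = t + δ by omega, hshift t]
  have hD1 : ξ ^ D ≠ 1 := fun h => H3 ((hξ.zpow_eq_one_iff_dvd D).mp h)
  have h0 : (1 - ξ ^ D) * ∑ t ∈ range N, ξ ^ F t = 0 := by
    rw [sub_mul, one_mul]
    rw [← key]
    ring
  rcases mul_eq_zero.mp h0 with h | h
  · exact absurd (by linear_combination -h : ξ ^ D = 1) hD1
  · exact h


lemma abs_one_of_pow (z : ℂ) (N : ℕ) (hN : N ≠ 0) (h : z ^ N = 1) : ‖z‖ = 1 := by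
  have h1 : ‖z‖ ^ N = 1 := by rw [← norm_pow, h, norm_one]
  have h0 : 0 ≤ ‖z‖ := norm_nonneg z
  rcases lt_trichotomy ‖z‖ 1 with hlt | heq | hgt
  · have := pow_lt_one₀ h0 hlt hN
    rw [h1] at this
    exact absurd this (lt_irrefl 1)
  · exact heq
  · have := one_lt_pow₀ hgt hN
    rw [h1] at this
    exact absurd this (lt_irrefl 1)


end Stmt14Aux

namespace Stmt14Aux
/-- the exponent function -/
def G (p d e : ℕ) (a b c : ℤ) (t : ℕ) : ℤ :=
  a + b * (t : ℤ) + c * ∑ j ∈ Icc 2 d, (t.choose j : ℤ) * (p : ℤ) ^ ((j - 2) * e)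

section main

variable (p k d e : ℕ) (a b c : ℤ)

/-- difference identity (single Vandermonde) -/
lemma GD (v t : ℕ) :
    G p d e a b c (t + v) - G p d e a b c t
      = b * v + c * ∑ j ∈ Icc 2 d,
          (∑ i ∈ range j, (v.choose (i+1) : ℤ) * (t.choose (j - (i+1)) : ℤ))
            * (p : ℤ) ^ ((j - 2) * e) := by
  simp only [G]
  have h1 : ∀ j ∈ Icc 2 d,
      ((t + v).choose j : ℤ) * (p : ℤ) ^ ((j - 2) * e)
        = (t.choose j : ℤ) * (p : ℤ) ^ ((j - 2) * e)
          + (∑ i ∈ range j, (v.choose (i+1) : ℤ) * (t.choose (j - (i+1)) : ℤ))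
              * (p : ℤ) ^ ((j - 2) * e) := by
    intro j _
    rw [vand1']
    ring
  rw [Finset.sum_congr rfl h1, Finset.sum_add_distrib]
  push_cast
  ring

/-- periodicity mod `p^k` -/
lemma D1 (hp : p.Prime) (h3p : 3 ≤ p) (he : 1 ≤ e) (t : ℕ) :
    (p : ℤ) ^ k ∣ G p d e a b c (t + p ^ k) - G p d e a b c t := by
  rw [GD]
  apply dvd_add
  · have : (b * ((p ^ k : ℕ) : ℤ)) = ((p:ℤ)^k) * b := by push_cast; ring
    rw [this]
    exact Dvd.intro _ rfl
  · apply Dvd.dvd.mul_left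
    apply Finset.dvd_sum
    intro j hj
    have hj2 : 2 ≤ j := (Finset.mem_Icc.mp hj).1
    rw [Finset.sum_mul]
    apply Finset.dvd_sum
    intro i hi
    have hi1 : i + 1 ≤ j := Finset.mem_range.mp hi
    have hnat : p ^ k ∣ p ^ ((j - 2) * e) * (p ^ k).choose (i+1) :=
      per_dvd p hp h3p he (Nat.le_add_left 1 i) hi1 hj2
    have hint : (p:ℤ) ^ k ∣ ((p:ℤ) ^ ((j - 2) * e) * ((p ^ k).choose (i+1) : ℤ)) := by
      have := Int.natCast_dvd_natCast.mpr hnat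
      push_cast at this
      exact this
    have heq : ((p ^ k).choose (i+1) : ℤ) * (t.choose (j - (i+1)) : ℤ) * (p : ℤ) ^ ((j - 2) * e)
        = ((p:ℤ) ^ ((j - 2) * e) * ((p ^ k).choose (i+1) : ℤ)) * (t.choose (j - (i+1)) : ℤ) := by
      ring
    rw [heq]
    exact hint.mul_right _

section inner

variable (u' : ℕ) (hp : p.Prime) (h3p : 3 ≤ p) (he : 1 ≤ e)
  (hu1 : 1 ≤ u') (huk : u' < p ^ k)

/-- the double-difference identity -/
lemma FD (δ : ℕ) (t : ℕ) :
    (G p d e a b c (t + δ + u') - G p d e a b c (t + δ))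
      - (G p d e a b c (t + u') - G p d e a b c t)
      = c * ∑ j ∈ Icc 2 d,
          (∑ i ∈ range j, (u'.choose (i+1) : ℤ) *
            (∑ l ∈ range (j - (i+1)), (δ.choose (l+1) : ℤ)
              * (t.choose (j - (i+1) - (l+1)) : ℤ)))
            * (p : ℤ) ^ ((j - 2) * e) := by
  rw [GD p d e a b c u' (t + δ), GD p d e a b c u' t]
  have h1 : ∀ j ∈ Icc 2 d,
      (∑ i ∈ range j, (u'.choose (i+1) : ℤ) * ((t + δ).choose (j - (i+1)) : ℤ))
          * (p : ℤ) ^ ((j - 2) * e)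
        = (∑ i ∈ range j, (u'.choose (i+1) : ℤ) * (t.choose (j - (i+1)) : ℤ))
            * (p : ℤ) ^ ((j - 2) * e)
          + (∑ i ∈ range j, (u'.choose (i+1) : ℤ) *
              (∑ l ∈ range (j - (i+1)), (δ.choose (l+1) : ℤ)
                * (t.choose (j - (i+1) - (l+1)) : ℤ)))
              * (p : ℤ) ^ ((j - 2) * e) := by
    intro j _
    have h2 : ∀ i ∈ range j,
        (u'.choose (i+1) : ℤ) * ((t + δ).choose (j - (i+1)) : ℤ)
          = (u'.choose (i+1) : ℤ) * (t.choose (j - (i+1)) : ℤ)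
            + (u'.choose (i+1) : ℤ) *
              (∑ l ∈ range (j - (i+1)), (δ.choose (l+1) : ℤ)
                * (t.choose (j - (i+1) - (l+1)) : ℤ)) := by
      intro i _
      rw [vand1' δ t (j - (i+1))]
      ring
    rw [Finset.sum_congr rfl h2, Finset.sum_add_distrib]
    ring
  rw [Finset.sum_congr rfl h1, Finset.sum_add_distrib]
  ring

end inner

end main

end Stmt14Aux

namespace Part2

open Stmt14Aux

variable (p k d e : ℕ) (a b c : ℤ) (u' : ℕ)

/-- core per-term divisibility -/
lemma term_dvd (hp : p.Prime) (h3p : 3 ≤ p) (he : 1 ≤ e) {s : ℕ} (hs : s + 1 ≤ k)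
    (hu : p ^ s ∣ u') {j i l : ℕ} (hj : 3 ≤ j) (hli : (l+1) + (i+1) ≤ j) (X : ℤ) :
    (p : ℤ) ^ k ∣ (u'.choose (i+1) : ℤ)
      * (((p ^ (k - (s+1))).choose (l+1) : ℤ) * X) * (p : ℤ) ^ ((j - 2) * e) := by
  have hn : p ^ k ∣ p ^ ((j-2)*e) * ((p ^ (k - (s+1))).choose (l+1) * u'.choose (i+1)) :=
    key_dvd p hp hs hu dvd_rfl (Nat.le_add_left 1 l) (Nat.le_add_left 1 i)
      (ineq_key p hp h3p he (Nat.le_add_left 1 l) (Nat.le_add_left 1 i) hli hj)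
  have hint : (p:ℤ) ^ k ∣ ((p:ℤ) ^ ((j-2)*e)
      * (((p ^ (k - (s+1))).choose (l+1) : ℤ) * (u'.choose (i+1) : ℤ))) := by
    have := Int.natCast_dvd_natCast.mpr hn
    push_cast at this
    exact this
  have heq : (u'.choose (i+1) : ℤ) * (((p ^ (k - (s+1))).choose (l+1) : ℤ) * X)
        * (p : ℤ) ^ ((j - 2) * e)
      = ((p:ℤ) ^ ((j-2)*e)
          * (((p ^ (k - (s+1))).choose (l+1) : ℤ) * (u'.choose (i+1) : ℤ))) * X := by
    ring
  rw [heq]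
  exact hint.mul_right X

lemma H1F (hp : p.Prime) (h3p : 3 ≤ p) (he : 1 ≤ e) (t : ℕ) :
    (p : ℤ) ^ k ∣ (G p d e a b c (t + p ^ k + u') - G p d e a b c (t + p ^ k))
      - (G p d e a b c (t + u') - G p d e a b c t) := by
  have e1 := D1 p k d e a b c hp h3p he (t + u')
  have e2 := D1 p k d e a b c hp h3p he t
  have heq : (G p d e a b c (t + p ^ k + u') - G p d e a b c (t + p ^ k))
      - (G p d e a b c (t + u') - G p d e a b c t)
      = (G p d e a b c (t + u' + p ^ k) - G p d e a b c (t + u'))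
        - (G p d e a b c (t + p ^ k) - G p d e a b c t) := by
    rw [show t + p ^ k + u' = t + u' + p ^ k from by omega]
    ring
  rw [heq]
  exact dvd_sub e1 e2

lemma H2F (hp : p.Prime) (h3p : 3 ≤ p) (he : 1 ≤ e) {s : ℕ} (hs : s + 1 ≤ k)
    (hu : p ^ s ∣ u') (t : ℕ) :
    (p : ℤ) ^ k ∣ (G p d e a b c (t + p ^ (k - (s+1)) + u') - G p d e a b c (t + p ^ (k - (s+1))))
      - ((G p d e a b c (t + u') - G p d e a b c t)
        + ((G p d e a b c (p ^ (k - (s+1)) + u') - G p d e a b c (p ^ (k - (s+1))))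
          - (G p d e a b c u' - G p d e a b c 0))) := by
  set δ := p ^ (k - (s+1)) with hδdef
  have e1 := FD p d e a b c u' δ t
  have e2 := FD p d e a b c u' δ 0
  simp only [Nat.zero_add] at e2
  have heq : (G p d e a b c (t + δ + u') - G p d e a b c (t + δ))
      - ((G p d e a b c (t + u') - G p d e a b c t)
        + ((G p d e a b c (δ + u') - G p d e a b c δ)
          - (G p d e a b c u' - G p d e a b c 0)))
      = c * (∑ j ∈ Icc 2 d,
          ((∑ i ∈ range j, (u'.choose (i+1) : ℤ) *
            (∑ l ∈ range (j - (i+1)), (δ.choose (l+1) : ℤ)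
              * ((t.choose (j - (i+1) - (l+1)) : ℤ) - ((0:ℕ).choose (j - (i+1) - (l+1)) : ℤ))))
            * (p : ℤ) ^ ((j - 2) * e))) := by
    have expand : ∀ j ∈ Icc 2 d,
        ((∑ i ∈ range j, (u'.choose (i+1) : ℤ) *
            (∑ l ∈ range (j - (i+1)), (δ.choose (l+1) : ℤ)
              * ((t.choose (j - (i+1) - (l+1)) : ℤ) - ((0:ℕ).choose (j - (i+1) - (l+1)) : ℤ))))
            * (p : ℤ) ^ ((j - 2) * e))
          = ((∑ i ∈ range j, (u'.choose (i+1) : ℤ) *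
            (∑ l ∈ range (j - (i+1)), (δ.choose (l+1) : ℤ)
              * (t.choose (j - (i+1) - (l+1)) : ℤ)))
            * (p : ℤ) ^ ((j - 2) * e))
          - ((∑ i ∈ range j, (u'.choose (i+1) : ℤ) *
            (∑ l ∈ range (j - (i+1)), (δ.choose (l+1) : ℤ)
              * ((0:ℕ).choose (j - (i+1) - (l+1)) : ℤ)))
            * (p : ℤ) ^ ((j - 2) * e)) := by
      intro j _
      rw [← sub_mul]
      congr 1
      rw [← Finset.sum_sub_distrib]
      refine Finset.sum_congr rfl fun i _ => ?_
      rw [← mul_sub]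
      congr 1
      rw [← Finset.sum_sub_distrib]
      refine Finset.sum_congr rfl fun l _ => ?_
      ring
    rw [Finset.sum_congr rfl expand, Finset.sum_sub_distrib]
    rw [mul_sub, ← e1, ← e2]
    ring
  rw [heq]
  apply Dvd.dvd.mul_left
  apply Finset.dvd_sum
  intro j hj
  rw [Finset.sum_mul]
  apply Finset.dvd_sum
  intro i hi
  have hij : i + 1 ≤ j := Finset.mem_range.mp hi
  rw [Finset.mul_sum, Finset.sum_mul]
  apply Finset.dvd_sum
  intro l hl
  have hlj : l + 1 ≤ j - (i+1) := Finset.mem_range.mp hl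
  by_cases hM : j - (i+1) - (l+1) = 0
  · have hz : (t.choose (j - (i+1) - (l+1)) : ℤ) - ((0:ℕ).choose (j - (i+1) - (l+1)) : ℤ) = 0 := by
      rw [hM]; simp
    rw [hz]
    simp
  · have hj3 : 3 ≤ j := by omega
    have hli : (l+1) + (i+1) ≤ j := by omega
    exact term_dvd p k e u' hp h3p he hs hu hj3 hli _

lemma H3F (hp : p.Prime) (h3p : 3 ≤ p) (he : 1 ≤ e) (hd : 2 ≤ d)
    (hc : Int.gcd c (p : ℤ) = 1) (hu1 : 1 ≤ u') (huk : u' < p ^ k) :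
    ¬ ((p : ℤ) ^ k ∣ ((G p d e a b c (p ^ (k - (u'.factorization p + 1)) + u')
          - G p d e a b c (p ^ (k - (u'.factorization p + 1))))
        - (G p d e a b c u' - G p d e a b c 0))) := by
  set s := u'.factorization p with hsdef
  set δ := p ^ (k - (s+1)) with hδdef
  have hu0 : u' ≠ 0 := by omega
  have hu : p ^ s ∣ u' := Nat.ordProj_dvd u' p
  have hs : s + 1 ≤ k := by
    have h1 : p ^ s ≤ u' := Nat.le_of_dvd (by omega) hu
    have h2 : p ^ s < p ^ k := lt_of_le_of_lt h1 huk
    exact Nat.pow_lt_pow_iff_right hp.one_lt |>.mp h2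
  have e2 := FD p d e a b c u' δ 0
  simp only [Nat.zero_add] at e2
  rw [e2]
  -- split off j = 2
  have h2mem : (2 : ℕ) ∈ Icc 2 d := Finset.mem_Icc.mpr ⟨le_refl 2, hd⟩
  rw [← Finset.add_sum_erase _ _ h2mem]
  have hW2 : (∑ i ∈ range 2, (u'.choose (i+1) : ℤ) *
      (∑ l ∈ range (2 - (i+1)), (δ.choose (l+1) : ℤ)
        * ((0:ℕ).choose (2 - (i+1) - (l+1)) : ℤ)))
      * (p : ℤ) ^ ((2 - 2) * e) = (u' : ℤ) * (δ : ℤ) := by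
    simp [Finset.sum_range_succ]
  rw [hW2]
  have hrest : (p : ℤ) ^ k ∣ ∑ j ∈ (Icc 2 d).erase 2,
      (∑ i ∈ range j, (u'.choose (i+1) : ℤ) *
        (∑ l ∈ range (j - (i+1)), (δ.choose (l+1) : ℤ)
          * ((0:ℕ).choose (j - (i+1) - (l+1)) : ℤ)))
        * (p : ℤ) ^ ((j - 2) * e) := by
    apply Finset.dvd_sum
    intro j hj
    have hj3 : 3 ≤ j := by
      have h1 := Finset.mem_of_mem_erase hj
      have h2 := Finset.ne_of_mem_erase hj
      have := (Finset.mem_Icc.mp h1).1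
      omega
    rw [Finset.sum_mul]
    apply Finset.dvd_sum
    intro i hi
    have hij : i + 1 ≤ j := Finset.mem_range.mp hi
    rw [Finset.mul_sum, Finset.sum_mul]
    apply Finset.dvd_sum
    intro l hl
    have hlj : l + 1 ≤ j - (i+1) := Finset.mem_range.mp hl
    have hli : (l+1) + (i+1) ≤ j := by omega
    exact term_dvd p k e u' hp h3p he hs hu hj3 hli _
  intro hdvd
  have hmain : (p : ℤ) ^ k ∣ c * ((u' : ℤ) * (δ : ℤ)) := by
    have : c * ((u' : ℤ) * (δ : ℤ)) = c * ((u' : ℤ) * (δ : ℤ) + ∑ j ∈ (Icc 2 d).erase 2,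
        (∑ i ∈ range j, (u'.choose (i+1) : ℤ) *
          (∑ l ∈ range (j - (i+1)), (δ.choose (l+1) : ℤ)
            * ((0:ℕ).choose (j - (i+1) - (l+1)) : ℤ)))
          * (p : ℤ) ^ ((j - 2) * e)) - c * (∑ j ∈ (Icc 2 d).erase 2,
        (∑ i ∈ range j, (u'.choose (i+1) : ℤ) *
          (∑ l ∈ range (j - (i+1)), (δ.choose (l+1) : ℤ)
            * ((0:ℕ).choose (j - (i+1) - (l+1)) : ℤ)))
          * (p : ℤ) ^ ((j - 2) * e)) := by ring
    rw [this]
    exact dvd_sub hdvd (hrest.mul_left c)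
  -- now p^k ∣ c * u' * δ with δ = p^(k-(s+1)) leads to p^(s+1) ∣ u'
  have hδcast : ((δ : ℕ) : ℤ) = (p : ℤ) ^ (k - (s+1)) := by
    rw [hδdef]; push_cast; ring
  have hpow : (p : ℤ) ^ k = (p : ℤ) ^ (k - (s+1)) * (p : ℤ) ^ (s+1) := by
    rw [← pow_add]
    congr 1
    omega
  have hfact : c * ((u' : ℤ) * (δ : ℤ)) = (p : ℤ) ^ (k - (s+1)) * (c * (u' : ℤ)) := by
    rw [hδcast]; ring
  rw [hfact, hpow] at hmain
  have hp0 : (p : ℤ) ^ (k - (s+1)) ≠ 0 := by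
    apply pow_ne_zero
    exact_mod_cast hp.pos.ne'
  have hdvd2 : (p : ℤ) ^ (s+1) ∣ c * (u' : ℤ) :=
    (mul_dvd_mul_iff_left hp0).mp hmain
  have hcop : IsCoprime ((p : ℤ) ^ (s+1)) c := by
    apply IsCoprime.pow_left
    exact (Int.isCoprime_iff_gcd_eq_one.mpr hc).symm
  have hdvd3 : (p : ℤ) ^ (s+1) ∣ (u' : ℤ) := hcop.dvd_of_dvd_mul_left hdvd2
  have hdvd4 : p ^ (s+1) ∣ u' := by exact_mod_cast hdvd3
  exact Nat.pow_succ_factorization_not_dvd hu0 hp hdvd4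

end Part2


namespace Part3

open Stmt14Aux Part2

variable (p k d e : ℕ) (a b c : ℤ)

lemma lemB (hp : p.Prime) (h3p : 3 ≤ p) (he : 1 ≤ e) (hd : 2 ≤ d) (hk : 1 ≤ k)
    (hc : Int.gcd c (p : ℤ) = 1) {ξ : ℂ} (hξ : IsPrimitiveRoot ξ (p ^ k)) :
    (∑ t ∈ range (p ^ k), ξ ^ G p d e a b c t)
      * (∑ t ∈ range (p ^ k), ξ ^ (- G p d e a b c t)) = ((p ^ k : ℕ) : ℂ) := by
  set N := p ^ k with hNdef
  have hN1 : 1 ≤ N := Nat.one_le_pow _ _ hp.pos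
  have hξ0 : ξ ≠ 0 := by
    intro h
    have h1 := hξ.pow_eq_one
    rw [h, zero_pow (by omega : N ≠ 0)] at h1
    exact zero_ne_one h1
  -- periodicity of x ↦ ξ^(G x + w) for any shift w
  have hper : ∀ w : ℤ, ∀ x : ℕ, ξ ^ (G p d e a b c (x + N) + w) = ξ ^ (G p d e a b c x + w) := by
    intro w x
    obtain ⟨m, hm⟩ := D1 p k d e a b c hp h3p he x
    have hcast : ((N : ℕ) : ℤ) = (p : ℤ) ^ k := by rw [hNdef]; push_cast; ring
    have : G p d e a b c (x + N) + w = (G p d e a b c x + w) + (N : ℤ) * m := by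
      rw [hcast]; linarith [hm]
    rw [this, zpow_add₀ hξ0, zpow_mul, zpow_natCast, hξ.pow_eq_one, one_zpow, mul_one]
  -- expand the product
  rw [Finset.sum_mul_sum]
  have hterm : ∀ t t' : ℕ, ξ ^ G p d e a b c t * ξ ^ (- G p d e a b c t')
      = ξ ^ (G p d e a b c t - G p d e a b c t') := by
    intro t t'
    rw [← zpow_add₀ hξ0, sub_eq_add_neg]
  have step1 : ∀ t t' : ℕ, ∑ t' ∈ range N, ξ ^ G p d e a b c t * ξ ^ (- G p d e a b c t')
      = ∑ t' ∈ range N, ξ ^ (G p d e a b c t - G p d e a b c t') := by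
    intro t _
    exact Finset.sum_congr rfl fun t' _ => hterm t t'
  rw [Finset.sum_congr rfl fun t _ => step1 t 0]
  -- swap to sum over t' outside
  rw [Finset.sum_comm]
  -- for fixed t', reindex inner sum by shift t'
  have step2 : ∀ t' : ℕ, ∑ t ∈ range N, ξ ^ (G p d e a b c t - G p d e a b c t')
      = ∑ u ∈ range N, ξ ^ (G p d e a b c (t' + u) - G p d e a b c t') := by
    intro t'
    have := sum_shift (fun x => ξ ^ (G p d e a b c x - G p d e a b c t')) N
      (fun x => by
        show ξ ^ (G p d e a b c (x + N) - G p d e a b c t') = ξ ^ (G p d e a b c x - G p d e a b c t')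
        rw [sub_eq_add_neg, sub_eq_add_neg]
        exact hper (- G p d e a b c t') x) t'
    exact this.symm
  rw [Finset.sum_congr rfl fun t' _ => step2 t']
  rw [Finset.sum_comm]
  -- now peel u = 0
  obtain ⟨N', hN'⟩ : ∃ N', N = N' + 1 := ⟨N - 1, by omega⟩
  rw [hN']
  rw [Finset.sum_range_succ']
  have hzero : ∑ t' ∈ range (N' + 1), ξ ^ (G p d e a b c (t' + 0) - G p d e a b c t') = (N : ℂ) := by
    have : ∀ t' : ℕ, ξ ^ (G p d e a b c (t' + 0) - G p d e a b c t') = 1 := by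
      intro t'
      rw [Nat.add_zero, sub_self, zpow_zero]
    rw [Finset.sum_congr rfl fun t' _ => this t']
    simp [hN']
  rw [hzero]
  have hvanish : ∀ u ∈ range N', ∑ t' ∈ range (N' + 1),
      ξ ^ (G p d e a b c (t' + (u + 1)) - G p d e a b c t') = 0 := by
    intro u hu
    have hu1 : 1 ≤ u + 1 := Nat.le_add_left 1 u
    have huk : u + 1 < N := by
      have := Finset.mem_range.mp hu
      omega
    set u' := u + 1 with hu'def
    set s := u'.factorization p with hsdef
    have hu0 : u' ≠ 0 := by omega
    have hudvd : p ^ s ∣ u' := Nat.ordProj_dvd u' p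
    have hs : s + 1 ≤ k := by
      have h1 : p ^ s ≤ u' := Nat.le_of_dvd (by omega) hudvd
      have h2 : p ^ s < p ^ k := lt_of_le_of_lt h1 huk
      exact Nat.pow_lt_pow_iff_right hp.one_lt |>.mp h2
    rw [← hN']
    exact lemA hξ (fun x => G p d e a b c (x + u') - G p d e a b c x)
      (p ^ (k - (s+1)))
      ((G p d e a b c (p ^ (k - (s+1)) + u') - G p d e a b c (p ^ (k - (s+1))))
        - (G p d e a b c u' - G p d e a b c 0))
      (fun t => by
        have := H1F p k d e a b c u' hp h3p he t
        have hcast : ((N : ℕ) : ℤ) = (p : ℤ) ^ k := by rw [hNdef]; push_cast; ring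
        rw [hcast]
        exact this)
      (fun t => by
        have := H2F p k d e a b c u' hp h3p he hs hudvd t
        have hcast : ((N : ℕ) : ℤ) = (p : ℤ) ^ k := by rw [hNdef]; push_cast; ring
        rw [hcast]
        exact this)
      (by
        have := H3F p k d e a b c u' hp h3p he hd hc hu1 huk
        have hcast : ((N : ℕ) : ℤ) = (p : ℤ) ^ k := by rw [hNdef]; push_cast; ring
        rw [hcast]
        exact this)
  rw [Finset.sum_congr rfl hvanish]
  simp [hN']

end Part3


open Stmt14Aux Part2 Part3

/-- Let `p` be an odd prime, `a, b, c, d, e, k ∈ ℤ` with `d ≥ 2`,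
`e, k ≥ 1`, `gcd(c,p) = 1`, and `e ≥ 2` if `p = 3`.  Let `ζ` be a primitive `p^k`-th root
of unity and `g(t) = a + bt + c·Σ_{j=2}^{d} C(t,j)·p^{(j−2)e}`.  Then
`N_{ℚ(ζ)/ℚ}(Σ_{t<p^k} ζ^{g(t)}) = p^{k(p−1)p^{k−1}/2}`. -/
theorem stmt14 (p k d e : ℕ) (hp : p.Prime) (hodd : p ≠ 2)
    (hd : 2 ≤ d) (he : 1 ≤ e) (hk : 1 ≤ k) (a b c : ℤ)
    (hc : Int.gcd c (p : ℤ) = 1) (h3 : p = 3 → 2 ≤ e)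
    (ζ : ℂ) (hζ : IsPrimitiveRoot ζ (p ^ k)) :
    Algebra.norm ℚ
        (⟨∑ t ∈ Finset.range (p ^ k),
            ζ ^ (a + b * (t : ℤ) +
              c * ∑ j ∈ Finset.Icc 2 d, (t.choose j : ℤ) * (p : ℤ) ^ ((j - 2) * e)),
          sum_mem fun t _ =>
            IF.zpow_mem _ (IntermediateField.subset_adjoin ℚ {ζ} rfl) _⟩ :
          ↥(IntermediateField.adjoin ℚ {ζ})) =
      (p : ℚ) ^ (k * (p - 1) * p ^ (k - 1) / 2) := by
  have h3p : 3 ≤ p := by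
    have := hp.two_le
    omega
  set N := p ^ k with hNdef
  have hN0 : N ≠ 0 := by positivity
  have hN3 : 3 ≤ N := by
    calc 3 ≤ p := h3p
    _ = p ^ 1 := (pow_one p).symm
    _ ≤ p ^ k := Nat.pow_le_pow_right hp.pos hk
  set K := IntermediateField.adjoin ℚ {ζ} with hKdef
  have hζK : ζ ∈ K := IntermediateField.subset_adjoin ℚ {ζ} rfl
  set ζ' : K := ⟨ζ, hζK⟩ with hζ'def
  have hintζ : IsIntegral ℚ ζ := by
    have h0 : IsIntegral ℤ ζ := hζ.isIntegral (by omega)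
    exact h0.tower_top
  haveI : FiniteDimensional ℚ K := IntermediateField.adjoin.finiteDimensional hintζ
  -- ζ' is a primitive N-th root in K
  have hinjK : Function.Injective (algebraMap K ℂ) := (algebraMap K ℂ).injective
  have hζ' : IsPrimitiveRoot ζ' N := by
    apply IsPrimitiveRoot.of_map_of_injective (f := algebraMap K ℂ) _ hinjK
    exact hζ
  -- the element S
  set S : K := (⟨∑ t ∈ Finset.range N,
      ζ ^ (a + b * (t : ℤ) +
        c * ∑ j ∈ Finset.Icc 2 d, (t.choose j : ℤ) * (p : ℤ) ^ ((j - 2) * e)),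
    sum_mem fun t _ =>
      IF.zpow_mem _ (IntermediateField.subset_adjoin ℚ {ζ} rfl) _⟩ : K) with hSdef
  have hSsum : S = ∑ t ∈ Finset.range N, ζ' ^ G p d e a b c t := by
    apply Subtype.ext
    push_cast [G]
    rfl
  -- norm = product over embeddings
  have hnorm := Algebra.norm_eq_prod_embeddings (K := ℚ) (E := ℂ) S
  -- each embedding term
  have hembed : ∀ σ : K →ₐ[ℚ] ℂ, σ S = ∑ t ∈ Finset.range N, (σ ζ') ^ G p d e a b c t := by
    intro σ
    rw [hSsum, map_sum]
    refine Finset.sum_congr rfl fun t _ => ?_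
    exact map_zpow₀ (σ : K →+* ℂ) ζ' (G p d e a b c t)
  have hprim : ∀ σ : K →ₐ[ℚ] ℂ, IsPrimitiveRoot (σ ζ') N := by
    intro σ
    exact hζ'.map_of_injective (RingHom.injective (σ : K →+* ℂ))
  -- conjugation as a ℚ-algebra map
  set J : ℂ →ₐ[ℚ] ℂ := AlgHom.mk' (starRingEnd ℂ) (fun q x => by
    simp [Rat.smul_def, map_mul, map_ratCast]) with hJdef
  have hJapply : ∀ z : ℂ, J z = starRingEnd ℂ z := fun z => rfl
  -- key: σ S * conj (σ S) = N
  have hkey : ∀ σ : K →ₐ[ℚ] ℂ, σ S * (starRingEnd ℂ) (σ S) = (N : ℂ) := by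
    intro σ
    have hξ := hprim σ
    set ξ := σ ζ' with hξdef
    have habs : ‖ξ‖ = 1 := abs_one_of_pow ξ N hN0 hξ.pow_eq_one
    have hconjξ : (starRingEnd ℂ) ξ = ξ⁻¹ := (Complex.inv_eq_conj habs).symm
    have hconjS : (starRingEnd ℂ) (σ S) = ∑ t ∈ Finset.range N, ξ ^ (- G p d e a b c t) := by
      rw [hembed σ, map_sum]
      refine Finset.sum_congr rfl fun t _ => ?_
      rw [map_zpow₀ (starRingEnd ℂ) _ _, hconjξ, inv_zpow, ← zpow_neg]
    rw [hconjS, hembed σ]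
    exact lemB p k d e a b c hp h3p he hd hk hc hξ
  -- the square root scaling factor
  set r : ℂ := ((Real.sqrt N : ℝ) : ℂ)⁻¹ with hrdef
  have hsqrt : ((Real.sqrt N : ℝ) : ℂ) * ((Real.sqrt N : ℝ) : ℂ) = (N : ℂ) := by
    rw [← Complex.ofReal_mul, Real.mul_self_sqrt (Nat.cast_nonneg N)]
    push_cast
    ring
  have hNC0 : (N : ℂ) ≠ 0 := Nat.cast_ne_zero.mpr hN0
  have hs0 : ((Real.sqrt N : ℝ) : ℂ) ≠ 0 := by
    intro h
    rw [h, zero_mul] at hsqrt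
    exact hNC0 hsqrt.symm
  have hr0 : r ≠ 0 := inv_ne_zero hs0
  have hprod : ∏ σ : (K →ₐ[ℚ] ℂ), (σ S * r) = 1 := by
    apply Finset.prod_ninvolution (g := fun σ => J.comp σ)
    · intro σ
      have hJS : (J.comp σ) S = (starRingEnd ℂ) (σ S) := rfl
      rw [hJS]
      calc (σ S * r) * ((starRingEnd ℂ) (σ S) * r)
          = (σ S * (starRingEnd ℂ) (σ S)) * (r * r) := by ring
        _ = (N : ℂ) * (r * r) := by rw [hkey σ]
        _ = 1 := by
            rw [hrdef, ← mul_inv, hsqrt]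
            exact mul_inv_cancel₀ hNC0
    · intro σ _
      intro hgs
      have hev : (starRingEnd ℂ) (σ ζ') = σ ζ' := by
        have : (J.comp σ) ζ' = σ ζ' := by rw [hgs]
        exact this
      have habs : ‖σ ζ'‖ = 1 := abs_one_of_pow _ N hN0 (hprim σ).pow_eq_one
      have hinv : (σ ζ')⁻¹ = σ ζ' := by rw [Complex.inv_eq_conj habs]; exact hev
      have hξ0 : σ ζ' ≠ 0 := by
        intro h0
        rw [h0] at habs
        simp at habs
      have hsq : (σ ζ') ^ 2 = 1 := by
        calc (σ ζ') ^ 2 = σ ζ' * σ ζ' := sq _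
          _ = σ ζ' * (σ ζ')⁻¹ := by rw [hinv]
          _ = 1 := mul_inv_cancel₀ hξ0
      have hdvd : N ∣ 2 := (hprim σ).dvd_of_pow_eq_one 2 hsq
      have := Nat.le_of_dvd (by norm_num) hdvd
      omega
    · intro σ
      exact Finset.mem_univ _
    · intro σ
      ext x
      show J (J (σ x)) = σ x
      rw [hJapply, hJapply]
      exact Complex.conj_conj _
  have hprod2 : (∏ σ : (K →ₐ[ℚ] ℂ), σ S) * r ^ (Fintype.card (K →ₐ[ℚ] ℂ)) = 1 := by
    simpa [Finset.prod_mul_distrib, Finset.prod_const, Finset.card_univ] using hprod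
  have hcard : Fintype.card (K →ₐ[ℚ] ℂ) = N.totient := by
    rw [AlgHom.card ℚ K ℂ]
    rw [hKdef]
    rw [IntermediateField.adjoin.finrank hintζ]
    rw [← Polynomial.cyclotomic_eq_minpoly_rat hζ (by omega : 0 < N)]
    exact Polynomial.natDegree_cyclotomic N ℚ
  have hPi : ∏ σ : (K →ₐ[ℚ] ℂ), σ S = ((Real.sqrt N : ℝ) : ℂ) ^ N.totient := by
    have h2 : r ^ (Fintype.card (K →ₐ[ℚ] ℂ)) * ((Real.sqrt N : ℝ) : ℂ) ^ N.totient = 1 := by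
      rw [hcard, hrdef, inv_pow, inv_mul_cancel₀ (pow_ne_zero _ hs0)]
    calc ∏ σ : (K →ₐ[ℚ] ℂ), σ S
        = (∏ σ : (K →ₐ[ℚ] ℂ), σ S) * ((r ^ (Fintype.card (K →ₐ[ℚ] ℂ)))
            * ((Real.sqrt N : ℝ) : ℂ) ^ N.totient) := by rw [h2, mul_one]
      _ = ((∏ σ : (K →ₐ[ℚ] ℂ), σ S) * r ^ (Fintype.card (K →ₐ[ℚ] ℂ)))
            * ((Real.sqrt N : ℝ) : ℂ) ^ N.totient := by ring
      _ = ((Real.sqrt N : ℝ) : ℂ) ^ N.totient := by rw [hprod2, one_mul]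
  obtain ⟨q, hq⟩ : ∃ q, p - 1 = 2 * q := by
    have hoddp : Odd p := hp.odd_of_ne_two hodd
    obtain ⟨m, hm⟩ := hoddp
    exact ⟨m, by omega⟩
  have htot : N.totient = 2 * (q * p ^ (k - 1)) := by
    rw [hNdef, Nat.totient_prime_pow hp (by omega : 0 < k), hq]
    ring
  have hval : ((Real.sqrt N : ℝ) : ℂ) ^ N.totient = (p : ℂ) ^ (k * (q * p ^ (k - 1))) := by
    rw [htot, pow_mul]
    have hx2 : ((Real.sqrt N : ℝ) : ℂ) ^ 2 = (N : ℂ) := by rw [sq]; exact hsqrt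
    rw [hx2]
    have : (N : ℂ) = (p : ℂ) ^ k := by rw [hNdef]; push_cast; ring
    rw [this, ← pow_mul]
  have hexp : k * (p - 1) * p ^ (k - 1) / 2 = k * (q * p ^ (k - 1)) := by
    rw [hq]
    have h2 : k * (2 * q) * p ^ (k - 1) = 2 * (k * (q * p ^ (k - 1))) := by ring
    rw [h2, Nat.mul_div_cancel_left _ (by norm_num)]
  have hfinal : (algebraMap ℚ ℂ) (Algebra.norm ℚ S)
      = (algebraMap ℚ ℂ) ((p : ℚ) ^ (k * (p - 1) * p ^ (k - 1) / 2)) := by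
    rw [hnorm, hPi, hval, hexp]
    rw [map_pow]
    congr 1
  exact RingHom.injective (algebraMap ℚ ℂ) hfinal


end
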